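/- Closest-pair lower bound: with independent Gaussians X_i ~ N(μ, σ_i²), for any constant δ there is a constant C such that with probability at least 1 − 1/(2n^δ), every pair i ≠ j with max(i,j) ≥ k satisfies |X_i − X_j| > σ_k / n^C; in particular the gap between the closest k samples r_k = min_j (Y_{j+k} − Y_j) exceeds σ_k / n^C simultaneously for all k. -/

import Mathlib

open MeasureTheory ProbabilityTheory
open scoped NNReal ENNReal

lemma gauss_Icc_le (m : ℝ) (v : ℝ≥0) (hv : v ≠ 0) (a b : ℝ) :
    gaussianReal m v (Set.Icc a b) ≤
      ENNReal.ofReal ((b - a) / Real.sqrt (2 * Real.pi * (v : ℝ))) := by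
  rw [gaussianReal_apply m hv]
  have h1 : ∀ x : ℝ, gaussianPDF m v x
      ≤ ENNReal.ofReal ((Real.sqrt (2 * Real.pi * (v : ℝ)))⁻¹) := by
    intro x
    rw [gaussianPDF]
    apply ENNReal.ofReal_le_ofReal
    have hd : gaussianPDFReal m v x
        = (Real.sqrt (2 * Real.pi * (v : ℝ)))⁻¹ * Real.exp (-(x - m)^2 / (2 * (v:ℝ))) := rfl
    rw [hd]
    have hexp : Real.exp (-(x - m)^2 / (2 * (v:ℝ))) ≤ 1 := by
      rw [Real.exp_le_one_iff]
      apply div_nonpos_of_nonpos_of_nonneg (neg_nonpos.2 (sq_nonneg _)) (by positivity)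
    calc (Real.sqrt (2 * Real.pi * (v:ℝ)))⁻¹ * Real.exp (-(x - m)^2 / (2 * (v:ℝ)))
        ≤ (Real.sqrt (2 * Real.pi * (v:ℝ)))⁻¹ * 1 := by
          apply mul_le_mul_of_nonneg_left hexp (by positivity)
      _ = _ := mul_one _
  calc ∫⁻ x in Set.Icc a b, gaussianPDF m v x
      ≤ ∫⁻ _ in Set.Icc a b, ENNReal.ofReal ((Real.sqrt (2 * Real.pi * (v:ℝ)))⁻¹) :=
        lintegral_mono fun x => h1 x
    _ = ENNReal.ofReal ((Real.sqrt (2 * Real.pi * (v:ℝ)))⁻¹) * volume (Set.Icc a b) := by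
        rw [setLIntegral_const]
    _ ≤ _ := by
        rw [Real.volume_Icc, ← ENNReal.ofReal_mul (by positivity)]
        exact ENNReal.ofReal_le_ofReal (le_of_eq (by rw [div_eq_inv_mul]))

lemma pair_abs_le_bound {Ω : Type} [MeasureSpace Ω] [IsProbabilityMeasure (ℙ : Measure Ω)]
    (m sj : ℝ) (hsj : 0 < sj) (Xi Xj : Ω → ℝ) (hXi : Measurable Xi) (hXj : Measurable Xj)
    (hind : IndepFun Xi Xj ℙ) (vi : ℝ≥0)
    (hli : Measure.map Xi ℙ = gaussianReal m vi)
    (hlj : Measure.map Xj ℙ = gaussianReal m (Real.toNNReal (sj ^ 2)))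
    (ε : ℝ) :
    ℙ {ω | |Xi ω - Xj ω| ≤ ε} ≤ ENNReal.ofReal (2 * ε / (Real.sqrt (2 * Real.pi) * sj)) := by
  have hS : MeasurableSet {p : ℝ × ℝ | |p.1 - p.2| ≤ ε} :=
    measurableSet_le (measurable_fst.sub measurable_snd).abs measurable_const
  have hmap := (indepFun_iff_map_prod_eq_prod_map_map hXi.aemeasurable hXj.aemeasurable).mp hind
  have hset : {ω | |Xi ω - Xj ω| ≤ ε}
      = (fun ω => (Xi ω, Xj ω)) ⁻¹' {p : ℝ × ℝ | |p.1 - p.2| ≤ ε} := rfl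
  rw [hset, ← Measure.map_apply (hXi.prodMk hXj) hS, hmap, Measure.prod_apply hS]
  have hv : Real.toNNReal (sj ^ 2) ≠ 0 := (Real.toNNReal_pos.mpr (by positivity)).ne'
  have hslice : ∀ x : ℝ, (Measure.map Xj ℙ) (Prod.mk x ⁻¹' {p : ℝ × ℝ | |p.1 - p.2| ≤ ε})
      ≤ ENNReal.ofReal (2 * ε / (Real.sqrt (2 * Real.pi) * sj)) := by
    intro x
    have hpre : Prod.mk x ⁻¹' {p : ℝ × ℝ | |p.1 - p.2| ≤ ε} = Set.Icc (x - ε) (x + ε) := by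
      ext y
      simp only [Set.mem_preimage, Set.mem_setOf_eq, Set.mem_Icc, abs_le]
      constructor <;> rintro ⟨h1, h2⟩ <;> constructor <;> linarith
    rw [hpre, hlj]
    refine (gauss_Icc_le _ _ hv _ _).trans (le_of_eq ?_)
    congr 1
    have hc : ((Real.toNNReal (sj ^ 2) : ℝ≥0) : ℝ) = sj ^ 2 :=
      Real.coe_toNNReal _ (sq_nonneg _)
    rw [hc, show 2 * Real.pi * sj ^ 2 = (2 * Real.pi) * sj ^ 2 by ring,
      Real.sqrt_mul (by positivity), Real.sqrt_sq hsj.le]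
    ring
  calc ∫⁻ x, (Measure.map Xj ℙ) (Prod.mk x ⁻¹' {p : ℝ × ℝ | |p.1 - p.2| ≤ ε})
        ∂(Measure.map Xi ℙ)
      ≤ ∫⁻ _, ENNReal.ofReal (2 * ε / (Real.sqrt (2 * Real.pi) * sj))
        ∂(Measure.map Xi ℙ) := lintegral_mono hslice
    _ = _ := by rw [lintegral_const, hli, measure_univ, mul_one]
open scoped NNReal ENNReal

/-- Closest-pair lower bound: for independent Gaussians X_i ~ N(μ, σ_i²) with
σ_1 ≤ ... ≤ σ_n, for any constant δ > 0 there is a constant C such that with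
probability at least 1 − 1/(2n^δ), every pair i ≠ j with max(i,j) ≥ k satisfies
|X_i − X_j| > σ_k / n^C; in particular the gap between the closest k samples
exceeds σ_k / n^C simultaneously for all k. -/
theorem stmt_8 (δ : ℝ) (hδ : 0 < δ) :
    ∃ C : ℝ, 0 < C ∧
      ∀ (n : ℕ), 2 ≤ n →
      ∀ (Ω : Type) (mΩ : MeasureSpace Ω) (hP : IsProbabilityMeasure (ℙ : Measure Ω))
        (μ : ℝ) (σ : Fin n → ℝ) (hσ : ∀ i, 0 < σ i) (hmono : Monotone σ)
        (X : Fin n → Ω → ℝ) (hmeas : ∀ i, Measurable (X i))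
        (hindep : iIndepFun X ℙ)
        (hlaw : ∀ i, Measure.map (X i) ℙ = gaussianReal μ (Real.toNNReal ((σ i) ^ 2))),
      ENNReal.ofReal (1 - 1 / (2 * (n : ℝ) ^ δ)) ≤
        ℙ {ω | ∀ i j k : Fin n, i ≠ j → (k ≤ i ∨ k ≤ j) →
          σ k / (n : ℝ) ^ C < |X i ω - X j ω|} := by
  refine ⟨δ + 3, by linarith, ?_⟩
  intro n hn Ω mΩ hP μ σ hσ hmono X hmeas hindep hlaw
  have hx : (2 : ℝ) ≤ (n : ℝ) := by exact_mod_cast hn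
  have hx0 : (0 : ℝ) < (n : ℝ) := by linarith
  have hP0 : (0 : ℝ) < (n : ℝ) ^ (δ + 3) := Real.rpow_pos_of_pos hx0 _
  set T : Fin n → Fin n → Set Ω := fun i j =>
    {ω | |X i ω - X j ω| ≤ σ j / (n : ℝ) ^ (δ + 3)} ∩ {ω | i < j} with hT
  have hTmeas : ∀ i j, MeasurableSet (T i j) := fun i j =>
    (measurableSet_le ((hmeas i).sub (hmeas j)).abs measurable_const).inter
      (MeasurableSet.const _)
  -- bound on each bad event
  have hsqrt2 : (2 : ℝ) ≤ Real.sqrt (2 * Real.pi) := by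
    nlinarith [Real.sq_sqrt (by positivity : (0:ℝ) ≤ 2 * Real.pi),
      Real.sqrt_nonneg (2 * Real.pi), Real.pi_gt_three]
  have hTle : ∀ i j, ℙ (T i j) ≤ ENNReal.ofReal ((n : ℝ) ^ (-(δ + 3))) := by
    intro i j
    by_cases h : i < j
    · have h1 : ℙ (T i j) ≤ ℙ {ω | |X i ω - X j ω| ≤ σ j / (n : ℝ) ^ (δ + 3)} :=
        measure_mono Set.inter_subset_left
      have h2 := pair_abs_le_bound μ (σ j) (hσ j) (X i) (X j) (hmeas i) (hmeas j)
        (hindep.indepFun h.ne) (Real.toNNReal ((σ i) ^ 2)) (hlaw i) (hlaw j)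
        (σ j / (n : ℝ) ^ (δ + 3))
      refine (h1.trans h2).trans (ENNReal.ofReal_le_ofReal ?_)
      rw [Real.rpow_neg hx0.le]
      have hσj := hσ j
      have hden : (0:ℝ) < Real.sqrt (2 * Real.pi) * σ j :=
        mul_pos (by positivity) hσj
      rw [div_le_iff₀ hden, div_eq_mul_inv]
      nlinarith [mul_nonneg (mul_pos (inv_pos.mpr hP0) hσj).le (sub_nonneg.mpr hsqrt2),
        mul_pos (inv_pos.mpr hP0) hσj]
    · have hsub : T i j ⊆ (∅ : Set Ω) := fun ω hω => absurd hω.2 h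
      exact ((measure_mono hsub).trans (by simp)).trans zero_le
  -- union bound
  have hUnion : ℙ (⋃ i, ⋃ j, T i j) ≤ ENNReal.ofReal (1 / (2 * (n : ℝ) ^ δ)) := by
    have hB : ∀ i : Fin n, ∑' j : Fin n, ℙ (T i j)
        ≤ (n : ℝ≥0∞) * ENNReal.ofReal ((n : ℝ) ^ (-(δ + 3))) := by
      intro i
      calc ∑' j : Fin n, ℙ (T i j)
          ≤ ∑' _ : Fin n, ENNReal.ofReal ((n : ℝ) ^ (-(δ + 3))) :=
            ENNReal.tsum_le_tsum fun j => hTle i j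
        _ = (n : ℝ≥0∞) * ENNReal.ofReal ((n : ℝ) ^ (-(δ + 3))) := by
            simp [tsum_fintype, Finset.sum_const, Finset.card_univ, nsmul_eq_mul]
    calc ℙ (⋃ i, ⋃ j, T i j)
        ≤ ∑' i : Fin n, ℙ (⋃ j, T i j) := measure_iUnion_le _
      _ ≤ ∑' i : Fin n, ∑' j : Fin n, ℙ (T i j) :=
          ENNReal.tsum_le_tsum fun i => measure_iUnion_le _
      _ ≤ ∑' _ : Fin n, (n : ℝ≥0∞) * ENNReal.ofReal ((n : ℝ) ^ (-(δ + 3))) :=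
          ENNReal.tsum_le_tsum hB
      _ = (n : ℝ≥0∞) * ((n : ℝ≥0∞) * ENNReal.ofReal ((n : ℝ) ^ (-(δ + 3)))) := by
          simp [tsum_fintype, Finset.sum_const, Finset.card_univ, nsmul_eq_mul, mul_assoc]
      _ ≤ ENNReal.ofReal (1 / (2 * (n : ℝ) ^ δ)) := by
          rw [show ((n : ℝ≥0∞)) = ENNReal.ofReal (n : ℝ) by simp,
            ← ENNReal.ofReal_mul hx0.le, ← ENNReal.ofReal_mul hx0.le]
          apply ENNReal.ofReal_le_ofReal
          have h2 : (n : ℝ) ^ (2 : ℝ) = (n : ℝ) * (n : ℝ) := by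
            rw [show (2:ℝ) = ((2:ℕ) : ℝ) by norm_num, Real.rpow_natCast]; ring
          have key : (n : ℝ) * ((n : ℝ) * (n : ℝ) ^ (-(δ + 3)))
              = (n : ℝ) ^ (-(δ + 1)) := by
            rw [show (-(δ + 1) : ℝ) = 2 + (-(δ + 3)) by ring, Real.rpow_add hx0, h2]
            ring
          rw [key, Real.rpow_neg hx0.le]
          have hpow : (0 : ℝ) < (n : ℝ) ^ δ := Real.rpow_pos_of_pos hx0 δ
          have hge : 2 * (n : ℝ) ^ δ ≤ (n : ℝ) ^ (δ + 1) := by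
            rw [Real.rpow_add hx0, Real.rpow_one]; nlinarith
          calc ((n : ℝ) ^ (δ + 1))⁻¹ ≤ (2 * (n : ℝ) ^ δ)⁻¹ :=
                inv_anti₀ (by positivity) hge
            _ = 1 / (2 * (n : ℝ) ^ δ) := (one_div _).symm
  -- complement inclusion
  have hsub : (⋃ i, ⋃ j, T i j)ᶜ ⊆ {ω | ∀ i j k : Fin n, i ≠ j → (k ≤ i ∨ k ≤ j) →
      σ k / (n : ℝ) ^ (δ + 3) < |X i ω - X j ω|} := by
    intro ω hω i j k hne hk
    simp only [Set.mem_compl_iff, Set.mem_iUnion, not_exists] at hω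
    rcases hne.lt_or_gt with h | h
    · have hkj : k ≤ j := hk.elim (fun hki => hki.trans h.le) id
      have hσk : σ k / (n : ℝ) ^ (δ + 3) ≤ σ j / (n : ℝ) ^ (δ + 3) :=
        (div_le_div_iff_of_pos_right hP0).mpr (hmono hkj)
      refine hσk.trans_lt ?_
      by_contra hno
      push_neg at hno
      exact hω i j ⟨hno, h⟩
    · have hki : k ≤ i := hk.elim id (fun hkj => hkj.trans h.le)
      have hσk : σ k / (n : ℝ) ^ (δ + 3) ≤ σ i / (n : ℝ) ^ (δ + 3) :=
        (div_le_div_iff_of_pos_right hP0).mpr (hmono hki)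
      refine hσk.trans_lt ?_
      rw [abs_sub_comm]
      by_contra hno
      push_neg at hno
      exact hω j i ⟨hno, h⟩
  have hmeasU : MeasurableSet (⋃ i, ⋃ j, T i j) :=
    MeasurableSet.iUnion fun i => MeasurableSet.iUnion fun j => hTmeas i j
  calc ENNReal.ofReal (1 - 1 / (2 * (n : ℝ) ^ δ))
      = 1 - ENNReal.ofReal (1 / (2 * (n : ℝ) ^ δ)) := by
        rw [ENNReal.ofReal_sub _ (by positivity), ENNReal.ofReal_one]
    _ ≤ 1 - ℙ (⋃ i, ⋃ j, T i j) := tsub_le_tsub_left hUnion 1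
    _ = ℙ ((⋃ i, ⋃ j, T i j)ᶜ) := (prob_compl_eq_one_sub hmeasU).symm
    _ ≤ _ := measure_mono hsub
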